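/- Let N ≥ 2, α ∈ (0,2), β := 2(α−1)/α, κ_α := 2^{1−α}Γ(1−α/2)/Γ(α/2), Ω ⊂ ℝ^N a bounded open set, and let w : Ω × (0,∞) → [0,∞) be continuous and bounded on the closure of C_Ω := Ω × (0,∞), of class C² on C_Ω with bounded derivatives up to order two, satisfying z^β ∂²_z w + Δ_x w = 0 in C_Ω, w = 0 on ∂Ω × [0,∞), with |{x ∈ Ω : w(x,z) = w*(s,z)}| = 0 for almost every (s,z), and lim_{z→0⁺} ∂_z w(x,z) = −α^{α−1} κ_α f(x) uniformly in x ∈ Ω for a bounded continuous f. Then U(s,z) := ∫_0^s w*(σ,z) dσ satisfies liminf_{z→0⁺} ∂U/∂z(s,z) ≥ −α^{α−1} κ_α ∫_0^s f*(σ) dσ for every s ∈ (0,|Ω|). -/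

import Mathlib

open MeasureTheory Filter Set
open scoped ENNReal Topology

noncomputable section

abbrev Euc (N : ℕ) := EuclideanSpace ℝ (Fin N)

/-- Decreasing rearrangement of `g` on `E`:
`g*(s) = sup {t ≥ 0 : |{x ∈ E : |g x| > t}| > s}`. -/
def rearr {N : ℕ} (E : Set (Euc N)) (g : Euc N → ℝ) (s : ℝ) : ℝ :=
  sSup {t : ℝ | 0 ≤ t ∧ ENNReal.ofReal s < volume {x | x ∈ E ∧ t < |g x|}}

/-- `κ_α = 2^{1-α} Γ(1-α/2) / Γ(α/2)`. -/
def kappa (α : ℝ) : ℝ := (2 : ℝ) ^ (1 - α) * Real.Gamma (1 - α / 2) / Real.Gamma (α / 2)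

/-- Laplacian of `w` with respect to the `x` variables. -/
def lapx {N : ℕ} (w : Euc N → ℝ → ℝ) (x : Euc N) (z : ℝ) : ℝ :=
  ∑ i : Fin N, deriv (deriv fun t : ℝ => w (x + t • EuclideanSpace.single i (1 : ℝ)) z) 0


namespace RearrAux

variable {N : ℕ} {Ω : Set (Euc N)} {u v : Euc N → ℝ} {M σ : ℝ}

lemma rearr_nonneg : 0 ≤ rearr Ω u σ :=
  Real.sSup_nonneg fun _t ht => ht.1

lemma bddAbove_rearrSet (hM : ∀ x ∈ Ω, |u x| ≤ M) :
    BddAbove {t : ℝ | 0 ≤ t ∧ ENNReal.ofReal σ < volume {x | x ∈ Ω ∧ t < |u x|}} := by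
  refine ⟨max M 0, fun t ht => ?_⟩
  by_contra hlt
  push_neg at hlt
  have hempty : {x | x ∈ Ω ∧ t < |u x|} = ∅ := by
    ext x
    simp only [mem_setOf_eq, mem_empty_iff_false, iff_false, not_and, not_lt]
    intro hxΩ
    exact le_trans ((hM x hxΩ).trans (le_max_left M 0)) hlt.le
  obtain ⟨-, ht2⟩ := ht
  rw [hempty, measure_empty] at ht2
  exact ENNReal.not_lt_zero ht2

lemma le_rearr (hM : ∀ x ∈ Ω, |u x| ≤ M) {t : ℝ} (ht0 : 0 ≤ t)
    (hvol : ENNReal.ofReal σ < volume {x | x ∈ Ω ∧ t < |u x|}) : t ≤ rearr Ω u σ :=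
  le_csSup (bddAbove_rearrSet hM) ⟨ht0, hvol⟩

lemma rearr_le {a : ℝ}
    (h : ∀ t : ℝ, 0 ≤ t → ENNReal.ofReal σ < volume {x | x ∈ Ω ∧ t < |u x|} → t ≤ a)
    (ha : 0 ≤ a) : rearr Ω u σ ≤ a :=
  Real.sSup_le (fun _t ht => h _ ht.1 ht.2) ha

lemma rearr_mono_affine {c d : ℝ} (hc : 0 ≤ c) (hd : 0 ≤ d)
    (hM : ∀ x ∈ Ω, |u x| ≤ M) (h : ∀ x ∈ Ω, |v x| ≤ c * |u x| + d) :
    rearr Ω v σ ≤ c * rearr Ω u σ + d := by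
  have hr0 : 0 ≤ rearr Ω u σ := rearr_nonneg
  refine rearr_le (fun t ht0 hvol => ?_) (by positivity)
  rcases le_or_gt t d with htd | htd
  · nlinarith
  · have hcpos : 0 < c := by
      rcases hc.lt_or_eq with h' | h'
      · exact h'
      · exfalso
        have hempty : {x | x ∈ Ω ∧ t < |v x|} = ∅ := by
          ext x
          simp only [mem_setOf_eq, mem_empty_iff_false, iff_false, not_and, not_lt]
          intro hxΩ
          calc |v x| ≤ c * |u x| + d := h x hxΩ
            _ = d := by rw [← h']; ring
            _ ≤ t := htd.le
        rw [hempty, measure_empty] at hvol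
        exact ENNReal.not_lt_zero hvol
    have hsub : {x | x ∈ Ω ∧ t < |v x|} ⊆ {x | x ∈ Ω ∧ (t - d) / c < |u x|} := by
      rintro x ⟨hxΩ, hxt⟩
      refine ⟨hxΩ, ?_⟩
      rw [div_lt_iff₀ hcpos]
      have := h x hxΩ
      nlinarith
    have h' : (t - d) / c ≤ rearr Ω u σ :=
      le_rearr hM (le_of_lt (div_pos (by linarith) hcpos)) (lt_of_lt_of_le hvol (measure_mono hsub))
    rw [div_le_iff₀ hcpos] at h'
    nlinarith

lemma rearr_anti (hM : ∀ x ∈ Ω, |u x| ≤ M) : Antitone (rearr Ω u) := by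
  intro σ1 σ2 h12
  refine rearr_le (fun t ht0 hvol => ?_) rearr_nonneg
  exact le_rearr hM ht0 (lt_of_le_of_lt (ENNReal.ofReal_le_ofReal h12) hvol)

lemma rearr_intervalIntegrable (hM : ∀ x ∈ Ω, |u x| ≤ M) (a b : ℝ) :
    IntervalIntegrable (rearr Ω u) volume a b :=
  ((rearr_anti hM).antitoneOn _).intervalIntegrable

lemma rearr_sub_max {t : ℝ} (ht : 0 ≤ t) (hM : ∀ x ∈ Ω, |u x| ≤ M)
    (h : ∀ x ∈ Ω, |v x| ≤ max (|u x| - t) 0) :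
    rearr Ω v σ ≤ max (rearr Ω u σ - t) 0 := by
  refine rearr_le (fun t'' ht0 hvol => ?_) (le_max_right _ _)
  have hsub : {x | x ∈ Ω ∧ t'' < |v x|} ⊆ {x | x ∈ Ω ∧ t'' + t < |u x|} := by
    rintro x ⟨hxΩ, hxt⟩
    refine ⟨hxΩ, ?_⟩
    have h1 := (h x hxΩ)
    have h2 : t'' < max (|u x| - t) 0 := lt_of_lt_of_le hxt h1
    rcases max_cases (|u x| - t) 0 with ⟨heq, _⟩ | ⟨heq, _⟩ <;> rw [heq] at h2 <;> linarith
  have h' : t'' + t ≤ rearr Ω u σ :=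
    le_rearr hM (by linarith) (lt_of_lt_of_le hvol (measure_mono hsub))
  exact le_max_of_le_left (by linarith)



/-- Layer cake / equimeasurability at full measure. -/
lemma integral_rearr_eq (hΩo : IsOpen Ω) (hfin : volume Ω ≠ ⊤)
    (hvc : ContinuousOn v Ω) (hv0 : ∀ x ∈ Ω, 0 ≤ v x) (hM : ∀ x ∈ Ω, |v x| ≤ M) :
    ∫ σ in (0:ℝ)..(volume Ω).toReal, rearr Ω v σ = ∫ x in Ω, v x := by
  have hΩmeas := hΩo.measurableSet
  set L : ℝ := (volume Ω).toReal with hLdef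
  have hL0 : (0:ℝ) ≤ L := ENNReal.toReal_nonneg
  set D : ℝ → ℝ≥0∞ := fun t => volume {x | x ∈ Ω ∧ t < |v x|} with hDdef
  have hDanti : Antitone D := fun t1 t2 h12 =>
    measure_mono (fun x hx => ⟨hx.1, lt_of_le_of_lt h12 hx.2⟩)
  have hDmeas : Measurable D := hDanti.measurable
  have hDle : ∀ t, D t ≤ volume Ω := fun t => measure_mono fun x hx => hx.1
  have hDfin : ∀ t, D t ≠ ⊤ := fun t => (lt_of_le_of_lt (hDle t) hfin.lt_top).ne
  -- claim1
  have claim1 : ∀ σ : ℝ,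
      volume {t : ℝ | 0 < t ∧ ENNReal.ofReal σ < D t} = ENNReal.ofReal (rearr Ω v σ) := by
    intro σ
    set r := rearr Ω v σ with hrdef
    have hbdd := bddAbove_rearrSet (σ := σ) hM
    have hsub1 : Ioo 0 r ⊆ {t : ℝ | 0 < t ∧ ENNReal.ofReal σ < D t} := by
      rintro t ⟨ht0, htr⟩
      refine ⟨ht0, ?_⟩
      have hne : {t : ℝ | 0 ≤ t ∧ ENNReal.ofReal σ < volume {x | x ∈ Ω ∧ t < |v x|}}.Nonempty := by
        by_contra hcon
        rw [not_nonempty_iff_eq_empty] at hcon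
        have : r = 0 := by rw [hrdef, rearr, hcon, Real.sSup_empty]
        rw [this] at htr; linarith
      obtain ⟨a, ha, hta⟩ := exists_lt_of_lt_csSup hne htr
      exact lt_of_lt_of_le ha.2 (hDanti hta.le)
    have hsub2 : {t : ℝ | 0 < t ∧ ENNReal.ofReal σ < D t} ⊆ Ioc 0 r := by
      rintro t ⟨ht0, htσ⟩
      exact ⟨ht0, le_csSup hbdd ⟨ht0.le, htσ⟩⟩
    have h1 : volume (Ioo 0 r) ≤ volume {t : ℝ | 0 < t ∧ ENNReal.ofReal σ < D t} :=
      measure_mono hsub1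
    have h2 : volume {t : ℝ | 0 < t ∧ ENNReal.ofReal σ < D t} ≤ volume (Ioc 0 r) :=
      measure_mono hsub2
    rw [Real.volume_Ioo, sub_zero] at h1
    rw [Real.volume_Ioc, sub_zero] at h2
    exact le_antisymm h2 h1
  -- the product set
  set A : Set (ℝ × ℝ) := (Ioo (0:ℝ) L ×ˢ Ioi (0:ℝ)) ∩ {p : ℝ × ℝ | ENNReal.ofReal p.1 < D p.2}
    with hAdef
  have hAmeas : MeasurableSet A :=
    (measurableSet_Ioo.prod measurableSet_Ioi).inter
      (measurableSet_lt (ENNReal.measurable_ofReal.comp measurable_fst)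
        (hDmeas.comp measurable_snd))
  have EQ : ∫⁻ σ in Ioo (0:ℝ) L, ENNReal.ofReal (rearr Ω v σ) = ∫⁻ t in Ioi (0:ℝ), D t := by
    have lhs1 : ∀ σ : ℝ, volume (Prod.mk σ ⁻¹' A)
        = (Ioo (0:ℝ) L).indicator (fun σ' => ENNReal.ofReal (rearr Ω v σ')) σ := by
      intro σ
      by_cases hσ : σ ∈ Ioo (0:ℝ) L
      · rw [indicator_of_mem hσ]
        have hset : Prod.mk σ ⁻¹' A = {t : ℝ | 0 < t ∧ ENNReal.ofReal σ < D t} := by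
          ext t
          simp only [hAdef, mem_preimage, mem_inter_iff, mem_prod, mem_setOf_eq, mem_Ioi]
          tauto
        rw [hset, claim1]
      · rw [indicator_of_notMem hσ]
        have hset : Prod.mk σ ⁻¹' A = ∅ := by
          ext t
          simp only [hAdef, mem_preimage, mem_inter_iff, mem_prod, mem_setOf_eq,
            mem_empty_iff_false, iff_false]
          tauto
        rw [hset, measure_empty]
    have rhs1 : ∀ t : ℝ, volume ((fun σ => (σ, t)) ⁻¹' A) = (Ioi (0:ℝ)).indicator D t := by
      intro t
      by_cases ht : t ∈ Ioi (0:ℝ)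
      · rw [indicator_of_mem ht]
        have hset : ((fun σ => (σ, t)) ⁻¹' A) = Ioo 0 (min L (D t).toReal) := by
          ext σ
          simp only [hAdef, mem_preimage, mem_inter_iff, mem_prod, mem_setOf_eq, mem_Ioo,
            mem_Ioi, lt_min_iff]
          constructor
          · rintro ⟨⟨⟨h0σ, hσL⟩, -⟩, hσD⟩
            exact ⟨h0σ, hσL, (ENNReal.ofReal_lt_iff_lt_toReal h0σ.le (hDfin t)).mp hσD⟩
          · rintro ⟨h0σ, hσL, hσd⟩
            exact ⟨⟨⟨h0σ, hσL⟩, ht⟩,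
              (ENNReal.ofReal_lt_iff_lt_toReal h0σ.le (hDfin t)).mpr hσd⟩
        rw [hset, Real.volume_Ioo, sub_zero]
        have hminle : min L (D t).toReal = (D t).toReal :=
          min_eq_right (ENNReal.toReal_mono hfin (hDle t))
        rw [hminle, ENNReal.ofReal_toReal (hDfin t)]
      · rw [indicator_of_notMem ht]
        have hset : ((fun σ => (σ, t)) ⁻¹' A) = ∅ := by
          ext σ
          simp only [hAdef, mem_preimage, mem_inter_iff, mem_prod, mem_setOf_eq,
            mem_empty_iff_false, iff_false]
          tauto
        rw [hset, measure_empty]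
    calc ∫⁻ σ in Ioo (0:ℝ) L, ENNReal.ofReal (rearr Ω v σ)
        = ∫⁻ σ, (Ioo (0:ℝ) L).indicator (fun σ' => ENNReal.ofReal (rearr Ω v σ')) σ :=
          (lintegral_indicator measurableSet_Ioo (fun σ' => ENNReal.ofReal (rearr Ω v σ'))).symm
      _ = ∫⁻ σ, volume (Prod.mk σ ⁻¹' A) := by
          exact lintegral_congr fun σ => (lhs1 σ).symm
      _ = (volume.prod volume) A := (Measure.prod_apply hAmeas).symm
      _ = ∫⁻ t, volume ((fun σ => (σ, t)) ⁻¹' A) := Measure.prod_apply_symm hAmeas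
      _ = ∫⁻ t, (Ioi (0:ℝ)).indicator D t := lintegral_congr fun t => rhs1 t
      _ = ∫⁻ t in Ioi (0:ℝ), D t := lintegral_indicator measurableSet_Ioi D
  -- layer cake
  have hvmeas : AEMeasurable v (volume.restrict Ω) := hvc.aemeasurable hΩmeas
  have hv0' : 0 ≤ᵐ[volume.restrict Ω] v :=
    (ae_restrict_iff' hΩmeas).2 (Eventually.of_forall hv0)
  have hlc : ∫⁻ x in Ω, ENNReal.ofReal (v x)
      = ∫⁻ t in Ioi (0:ℝ), (volume.restrict Ω) {a | t < v a} :=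
    lintegral_eq_lintegral_meas_lt (volume.restrict Ω) hv0' hvmeas
  have hDt : ∀ t ∈ Ioi (0:ℝ), (volume.restrict Ω) {a | t < v a} = D t := by
    intro t _ht
    rw [Measure.restrict_apply' hΩmeas]
    congr 1
    ext x
    simp only [mem_inter_iff, mem_setOf_eq]
    constructor
    · rintro ⟨hxv, hxΩ⟩
      exact ⟨hxΩ, by rwa [abs_of_nonneg (hv0 x hxΩ)]⟩
    · rintro ⟨hxΩ, hxv⟩
      exact ⟨by rwa [abs_of_nonneg (hv0 x hxΩ)] at hxv, hxΩ⟩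
  have hEQ2 : ∫⁻ σ in Ioo (0:ℝ) L, ENNReal.ofReal (rearr Ω v σ)
      = ∫⁻ x in Ω, ENNReal.ofReal (v x) := by
    rw [EQ, hlc]
    exact (setLIntegral_congr_fun measurableSet_Ioi hDt).symm
  -- convert to real integrals
  have hmble : AEStronglyMeasurable (rearr Ω v) (volume.restrict (Ioo (0:ℝ) L)) :=
    ((rearr_anti hM).measurable).aestronglyMeasurable
  have h1 : ∫ σ in (0:ℝ)..L, rearr Ω v σ
      = (∫⁻ σ in Ioo (0:ℝ) L, ENNReal.ofReal (rearr Ω v σ)).toReal := by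
    rw [intervalIntegral.integral_of_le hL0, integral_Ioc_eq_integral_Ioo]
    exact integral_eq_lintegral_of_nonneg_ae
      (Eventually.of_forall fun σ => rearr_nonneg) hmble
  have h2 : ∫ x in Ω, v x = (∫⁻ x in Ω, ENNReal.ofReal (v x)).toReal :=
    integral_eq_lintegral_of_nonneg_ae hv0' (hvc.aestronglyMeasurable hΩmeas)
  rw [h1, h2, hEQ2]


lemma integrableOn_of_bounded (hΩo : IsOpen Ω) (hfin : volume Ω ≠ ⊤)
    (hvc : ContinuousOn v Ω) (hM : ∀ x ∈ Ω, |v x| ≤ M) :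
    IntegrableOn v Ω volume := by
  refine Integrable.mono' (g := fun _ => M)
    (integrableOn_const hfin)
    (hvc.aestronglyMeasurable hΩo.measurableSet) ?_
  exact (ae_restrict_iff' hΩo.measurableSet).2 (Eventually.of_forall fun x hx => hM x hx)

/-- the `(b)` half : `s·u*(s) + ∫_Ω (u - u*(s))₊ ≤ ∫_0^s u*`. -/
lemma half_ineq (hΩo : IsOpen Ω) (hfin : volume Ω ≠ ⊤) {g : Euc N → ℝ} {Mg : ℝ}
    (hgc : ContinuousOn g Ω) (hg0 : ∀ x ∈ Ω, 0 ≤ g x) (hMg : ∀ x ∈ Ω, |g x| ≤ Mg)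
    {s : ℝ} (hs0 : 0 ≤ s) (hsL : s ≤ (volume Ω).toReal) :
    s * rearr Ω g s + (∫ x in Ω, max (g x - rearr Ω g s) 0)
      ≤ ∫ σ in (0:ℝ)..s, rearr Ω g σ := by
  set L : ℝ := (volume Ω).toReal with hLdef
  set t₀ : ℝ := rearr Ω g s with ht₀def
  have ht₀0 : 0 ≤ t₀ := rearr_nonneg
  set vg : Euc N → ℝ := fun x => max (g x - t₀) 0 with hvgdef
  have hvg0 : ∀ x ∈ Ω, 0 ≤ vg x := fun x _ => le_max_right _ _
  have hvgc : ContinuousOn vg Ω := (hgc.sub continuousOn_const).sup continuousOn_const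
  have hMvg : ∀ x ∈ Ω, |vg x| ≤ max Mg 0 := by
    intro x hx
    rw [abs_of_nonneg (hvg0 x hx)]
    exact max_le_max (by have := (le_abs_self (g x)).trans (hMg x hx); linarith) le_rfl
  have hsubmax : ∀ σ' : ℝ, rearr Ω vg σ' ≤ max (rearr Ω g σ' - t₀) 0 := by
    intro σ'
    refine rearr_sub_max ht₀0 hMg fun x hx => ?_
    rw [abs_of_nonneg (hvg0 x hx)]
    exact max_le_max (sub_le_sub_right (le_abs_self _) _) le_rfl
  have hLC : ∫ σ in (0:ℝ)..L, rearr Ω vg σ = ∫ x in Ω, vg x :=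
    integral_rearr_eq hΩo hfin hvgc hvg0 hMvg
  have hsplit : (∫ σ in (0:ℝ)..s, rearr Ω vg σ) + (∫ σ in s..L, rearr Ω vg σ)
      = ∫ σ in (0:ℝ)..L, rearr Ω vg σ :=
    intervalIntegral.integral_add_adjacent_intervals
      (rearr_intervalIntegrable hMvg 0 s) (rearr_intervalIntegrable hMvg s L)
  have hbd1 : ∫ σ in (0:ℝ)..s, rearr Ω vg σ ≤ ∫ σ in (0:ℝ)..s, (rearr Ω g σ - t₀) := by
    refine intervalIntegral.integral_mono_on hs0 (rearr_intervalIntegrable hMvg 0 s)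
      ((rearr_intervalIntegrable hMg 0 s).sub intervalIntegrable_const) fun σ' hσ' => ?_
    have h1 := hsubmax σ'
    have h2 : t₀ ≤ rearr Ω g σ' := rearr_anti hMg hσ'.2
    rw [max_eq_left (by linarith)] at h1
    exact h1
  have hbd2 : ∫ σ in s..L, rearr Ω vg σ ≤ 0 := by
    have : ∫ σ in s..L, rearr Ω vg σ ≤ ∫ σ in s..L, (0:ℝ) := by
      refine intervalIntegral.integral_mono_on hsL (rearr_intervalIntegrable hMvg s L)
        intervalIntegrable_const fun σ' hσ' => ?_
      have h1 := hsubmax σ'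
      have h2 : rearr Ω g σ' ≤ t₀ := rearr_anti hMg hσ'.1
      rwa [max_eq_right (by linarith)] at h1
    simpa using this
  have hconst : ∫ σ in (0:ℝ)..s, (rearr Ω g σ - t₀)
      = (∫ σ in (0:ℝ)..s, rearr Ω g σ) - s * t₀ := by
    rw [intervalIntegral.integral_sub (rearr_intervalIntegrable hMg 0 s)
      intervalIntegrable_const, intervalIntegral.integral_const, sub_zero, smul_eq_mul]
  linarith [hLC, hsplit, hbd1, hbd2, hconst]

/-- Subadditivity-type inequality. -/
lemma integral_rearr_le (hΩo : IsOpen Ω) (hfin : volume Ω ≠ ⊤)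
    {g₁ g₂ h : Euc N → ℝ} {M₁ M₂ M₃ : ℝ}
    (hg₂c : ContinuousOn g₂ Ω) (hhc : ContinuousOn h Ω)
    (hg₁0 : ∀ x ∈ Ω, 0 ≤ g₁ x) (hg₂0 : ∀ x ∈ Ω, 0 ≤ g₂ x) (hh0 : ∀ x ∈ Ω, 0 ≤ h x)
    (hM₁ : ∀ x ∈ Ω, |g₁ x| ≤ M₁) (hM₂ : ∀ x ∈ Ω, |g₂ x| ≤ M₂) (hM₃ : ∀ x ∈ Ω, |h x| ≤ M₃)
    (hptw : ∀ x ∈ Ω, g₁ x ≤ g₂ x + h x)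
    {s : ℝ} (hs0 : 0 ≤ s) (hsL : s ≤ (volume Ω).toReal) :
    ∫ σ in (0:ℝ)..s, rearr Ω g₁ σ
      ≤ (∫ σ in (0:ℝ)..s, rearr Ω g₂ σ) + ∫ σ in (0:ℝ)..s, rearr Ω h σ := by
  set L : ℝ := (volume Ω).toReal with hLdef
  set t₂ : ℝ := rearr Ω g₂ s with ht₂def
  set th : ℝ := rearr Ω h s with hthdef
  have ht₂0 : 0 ≤ t₂ := rearr_nonneg
  have hth0 : 0 ≤ th := rearr_nonneg
  set v₂ : Euc N → ℝ := fun x => max (g₂ x - t₂) 0 with hv₂def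
  set vh : Euc N → ℝ := fun x => max (h x - th) 0 with hvhdef
  set p : Euc N → ℝ := fun x => v₂ x + vh x with hpdef
  have hv₂0 : ∀ x ∈ Ω, 0 ≤ v₂ x := fun x _ => le_max_right _ _
  have hvh0 : ∀ x ∈ Ω, 0 ≤ vh x := fun x _ => le_max_right _ _
  have hp0 : ∀ x ∈ Ω, 0 ≤ p x := fun x hx => add_nonneg (hv₂0 x hx) (hvh0 x hx)
  have hv₂b : ∀ x ∈ Ω, |v₂ x| ≤ max M₂ 0 := by
    intro x hx
    rw [abs_of_nonneg (hv₂0 x hx)]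
    exact max_le_max (by have := (le_abs_self (g₂ x)).trans (hM₂ x hx); linarith) le_rfl
  have hvhb : ∀ x ∈ Ω, |vh x| ≤ max M₃ 0 := by
    intro x hx
    rw [abs_of_nonneg (hvh0 x hx)]
    exact max_le_max (by have := (le_abs_self (h x)).trans (hM₃ x hx); linarith) le_rfl
  have hpb : ∀ x ∈ Ω, |p x| ≤ max M₂ 0 + max M₃ 0 := by
    intro x hx
    rw [abs_of_nonneg (hp0 x hx)]
    exact add_le_add ((le_abs_self _).trans (hv₂b x hx)) ((le_abs_self _).trans (hvhb x hx))
  have hv₂c : ContinuousOn v₂ Ω := (hg₂c.sub continuousOn_const).sup continuousOn_const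
  have hvhc : ContinuousOn vh Ω := (hhc.sub continuousOn_const).sup continuousOn_const
  have hpc : ContinuousOn p Ω := hv₂c.add hvhc
  -- step 2 : ∫₀ˢ g₁* ≤ ∫₀ˢ p* + s (t₂ + th)
  have hstep2 : ∫ σ in (0:ℝ)..s, rearr Ω g₁ σ
      ≤ (∫ σ in (0:ℝ)..s, rearr Ω p σ) + s * (t₂ + th) := by
    have hptx : ∀ x ∈ Ω, |g₁ x| ≤ 1 * |p x| + (t₂ + th) := by
      intro x hx
      rw [abs_of_nonneg (hg₁0 x hx), abs_of_nonneg (hp0 x hx), one_mul]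
      have h2 : g₂ x - t₂ ≤ v₂ x := le_max_left _ _
      have h3 : h x - th ≤ vh x := le_max_left _ _
      have h4 := hptw x hx
      have h5 : p x = v₂ x + vh x := rfl
      linarith
    have hpt : ∀ σ' : ℝ, rearr Ω g₁ σ' ≤ rearr Ω p σ' + (t₂ + th) := by
      intro σ'
      have := rearr_mono_affine (σ := σ') (c := 1) (d := t₂ + th) zero_le_one
        (by linarith) hpb hptx
      linarith
    calc ∫ σ in (0:ℝ)..s, rearr Ω g₁ σ
        ≤ ∫ σ in (0:ℝ)..s, (rearr Ω p σ + (t₂ + th)) := by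
          refine intervalIntegral.integral_mono_on hs0 (rearr_intervalIntegrable hM₁ 0 s)
            ((rearr_intervalIntegrable hpb 0 s).add intervalIntegrable_const)
            fun σ' _ => hpt σ'
      _ = (∫ σ in (0:ℝ)..s, rearr Ω p σ) + s * (t₂ + th) := by
          rw [intervalIntegral.integral_add (rearr_intervalIntegrable hpb 0 s)
            intervalIntegrable_const, intervalIntegral.integral_const, sub_zero, smul_eq_mul]
  -- step 3 : ∫₀ˢ p* ≤ ∫_Ω p
  have hstep3 : ∫ σ in (0:ℝ)..s, rearr Ω p σ ≤ ∫ x in Ω, p x := by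
    have hsplit : (∫ σ in (0:ℝ)..s, rearr Ω p σ) + (∫ σ in s..L, rearr Ω p σ)
        = ∫ σ in (0:ℝ)..L, rearr Ω p σ :=
      intervalIntegral.integral_add_adjacent_intervals
        (rearr_intervalIntegrable hpb 0 s) (rearr_intervalIntegrable hpb s L)
    have hnn : 0 ≤ ∫ σ in s..L, rearr Ω p σ :=
      intervalIntegral.integral_nonneg hsL fun σ' _ => rearr_nonneg
    have hLC : ∫ σ in (0:ℝ)..L, rearr Ω p σ = ∫ x in Ω, p x :=
      integral_rearr_eq hΩo hfin hpc hp0 hpb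
    linarith
  -- step 4 : ∫_Ω p = ∫_Ω v₂ + ∫_Ω vh
  have hstep4 : ∫ x in Ω, p x = (∫ x in Ω, v₂ x) + ∫ x in Ω, vh x :=
    integral_add (integrableOn_of_bounded hΩo hfin hv₂c hv₂b)
      (integrableOn_of_bounded hΩo hfin hvhc hvhb)
  -- step 5 : the two halves
  have hhalf₂ : s * t₂ + (∫ x in Ω, v₂ x) ≤ ∫ σ in (0:ℝ)..s, rearr Ω g₂ σ :=
    half_ineq hΩo hfin hg₂c hg₂0 hM₂ hs0 hsL
  have hhalfh : s * th + (∫ x in Ω, vh x) ≤ ∫ σ in (0:ℝ)..s, rearr Ω h σ :=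
    half_ineq hΩo hfin hhc hh0 hM₃ hs0 hsL
  linarith


end RearrAux

open RearrAux

/-- boundary inequality for the concentration function:
`liminf_{z→0⁺} ∂U/∂z(s,z) ≥ -α^{α-1} κ_α ∫_0^s f*(σ) dσ` for all `s ∈ (0,|Ω|)`. -/
theorem concentration_boundary_inequality
    {N : ℕ} (hN : 2 ≤ N) (α : ℝ) (hα : α ∈ Ioo (0 : ℝ) 2)
    (Ω : Set (Euc N)) (hΩo : IsOpen Ω) (hΩb : Bornology.IsBounded Ω)
    (f : Euc N → ℝ) (hfc : ContinuousOn f Ω) (hfb : ∃ M : ℝ, ∀ x ∈ Ω, |f x| ≤ M)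
    (w : Euc N → ℝ → ℝ)
    (hpos : ∀ x ∈ Ω, ∀ z ∈ Ioi (0 : ℝ), 0 ≤ w x z)
    (hcont : ContinuousOn (fun p : Euc N × ℝ => w p.1 p.2) (closure (Ω ×ˢ Ioi (0 : ℝ))))
    (hbdd : ∃ M : ℝ, ∀ p ∈ closure (Ω ×ˢ Ioi (0 : ℝ)), |w (Prod.fst p) p.2| ≤ M)
    (hC2 : ContDiffOn ℝ 2 (fun p : Euc N × ℝ => w p.1 p.2) (Ω ×ˢ Ioi (0 : ℝ)))
    (hderivBdd : ∃ M : ℝ, ∀ p ∈ Ω ×ˢ Ioi (0 : ℝ),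
      ‖fderiv ℝ (fun q : Euc N × ℝ => w q.1 q.2) p‖ ≤ M ∧
      ‖fderiv ℝ (fderiv ℝ fun q : Euc N × ℝ => w q.1 q.2) p‖ ≤ M)
    (hpde : ∀ x ∈ Ω, ∀ z ∈ Ioi (0 : ℝ),
      z ^ (2 * (α - 1) / α) * deriv (deriv (w x)) z + lapx w x z = 0)
    (hlateral : ∀ x ∈ frontier Ω, ∀ z ∈ Ici (0 : ℝ), w x z = 0)
    (hlevel : ∀ᵐ p : ℝ × ℝ
        ∂(volume.restrict (Ioo (0 : ℝ) (volume Ω).toReal ×ˢ Ioi (0 : ℝ))),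
      volume {x | x ∈ Ω ∧ w x p.2 = rearr Ω (fun x' => w x' p.2) p.1} = 0)
    (hneumann : ∀ ε > (0 : ℝ), ∃ δ > (0 : ℝ), ∀ z ∈ Ioo (0 : ℝ) δ, ∀ x ∈ Ω,
      |deriv (w x) z + α ^ (α - 1) * kappa α * f x| < ε) :
    ∀ s ∈ Ioo (0 : ℝ) (volume Ω).toReal,
      -(α ^ (α - 1) * kappa α * ∫ σ in (0 : ℝ)..s, rearr Ω f σ) ≤
        liminf (fun z : ℝ =>
            deriv (fun z' : ℝ => ∫ σ in (0 : ℝ)..s, rearr Ω (fun x => w x z') σ) z)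
          (nhdsWithin 0 (Ioi 0)) := by
  obtain ⟨Mf, hMf⟩ := hfb
  obtain ⟨Mw, hMw⟩ := hbdd
  have hfin : volume Ω ≠ ⊤ := by
    obtain ⟨R, hR⟩ := hΩb.subset_closedBall 0
    exact (lt_of_le_of_lt (measure_mono hR) measure_closedBall_lt_top).ne
  intro s hs
  set A : ℝ := α ^ (α - 1) * kappa α with hAdef
  have hκ : 0 < kappa α := by
    rw [kappa]
    apply div_pos
    · exact mul_pos (Real.rpow_pos_of_pos two_pos _)
        (Real.Gamma_pos_of_pos (by have := hα.2; simp only [mem_Ioo] at hα; linarith [hα.2]))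
    · exact Real.Gamma_pos_of_pos (by simp only [mem_Ioo] at hα; linarith [hα.1])
  have hA : 0 < A := mul_pos (Real.rpow_pos_of_pos hα.1 _) hκ
  set C : ℝ := A * ∫ σ in (0:ℝ)..s, rearr Ω f σ with hCdef
  have hC0 : 0 ≤ C :=
    mul_nonneg hA.le (intervalIntegral.integral_nonneg hs.1.le fun σ _ => rearr_nonneg)
  set F : ℝ → ℝ := fun z => ∫ σ in (0:ℝ)..s, rearr Ω (fun x => w x z) σ with hFdef
  have key : ∀ ε > (0:ℝ), ∀ᶠ z in 𝓝[>] (0:ℝ), -C - ε ≤ deriv F z := by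
    intro ε hε
    have hε₀ : 0 < ε / s := div_pos hε hs.1
    obtain ⟨δ, hδ0, hδ⟩ := hneumann (ε / s) hε₀
    filter_upwards [Ioo_mem_nhdsGT hδ0] with z hz
    by_cases hdiff : DifferentiableAt ℝ F z
    · -- slope bound
      have hslope : ∀ z' ∈ Ioo z δ, -(C + ε) ≤ slope F z z' := by
        intro z' hz'
        have hW : z < z' := hz'.1
        have hΔ : 0 < z' - z := by linarith
        have hz'0 : 0 < z' := lt_trans hz.1 hW
        -- pointwise inequality via MVT
        have hptw : ∀ x ∈ Ω, w x z ≤ w x z' + (z' - z) * (A * |f x| + ε / s) := by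
          intro x hx
          have hdwx : ∀ t ∈ Icc z z', DifferentiableAt ℝ (w x) t := by
            intro t ht
            have ht0 : 0 < t := lt_of_lt_of_le hz.1 ht.1
            have hD : DifferentiableAt ℝ (fun p : Euc N × ℝ => w p.1 p.2) (x, t) :=
              (hC2.contDiffAt ((hΩo.prod isOpen_Ioi).mem_nhds
                (show ((x : Euc N), t) ∈ Ω ×ˢ Ioi (0:ℝ) from ⟨hx, ht0⟩))).differentiableAt
                two_ne_zero
            have hcurve : DifferentiableAt ℝ (fun t' : ℝ => ((x : Euc N), t')) t :=
              DifferentiableAt.prodMk (differentiableAt_const x) differentiableAt_id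
            exact hD.comp t hcurve
          obtain ⟨c, hcmem, hceq⟩ := exists_deriv_eq_slope (w x) hW
            (fun t ht => (hdwx t ht).continuousAt.continuousWithinAt)
            (fun t ht => (hdwx t (Ioo_subset_Icc_self ht)).differentiableWithinAt)
          have hcδ : c ∈ Ioo (0:ℝ) δ := ⟨lt_trans hz.1 hcmem.1, lt_trans hcmem.2 hz'.2⟩
          have hnm := hδ c hcδ x hx
          have h1 : -(A * f x + ε / s) < deriv (w x) c := by
            have := (abs_lt.mp hnm).1
            linarith
          rw [hceq] at h1
          have h2 := (lt_div_iff₀ hΔ).mp h1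
          have h3 : A * f x ≤ A * |f x| := mul_le_mul_of_nonneg_left (le_abs_self _) hA.le
          nlinarith
        -- continuity of slices
        have hsl : ∀ z'' : ℝ, 0 < z'' → ContinuousOn (fun x => w x z'') Ω := by
          intro z'' hz''
          have h1 : ContinuousOn (fun x : Euc N => ((x : Euc N), z'')) Ω :=
            (continuous_id.prodMk continuous_const).continuousOn
          exact hcont.comp h1 fun x hx => subset_closure ⟨hx, hz''⟩
        have hb1 : ∀ x ∈ Ω, |w x z| ≤ Mw := fun x hx =>
          hMw (x, z) (subset_closure ⟨hx, hz.1⟩)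
        have hb2 : ∀ x ∈ Ω, |w x z'| ≤ Mw := fun x hx =>
          hMw (x, z') (subset_closure ⟨hx, hz'0⟩)
        have hh0 : ∀ x ∈ Ω, 0 ≤ (z' - z) * (A * |f x| + ε / s) := fun x hx => by positivity
        have hb3 : ∀ x ∈ Ω, |(z' - z) * (A * |f x| + ε / s)| ≤ (z' - z) * (A * Mf + ε / s) := by
          intro x hx
          rw [abs_of_nonneg (hh0 x hx)]
          have := mul_le_mul_of_nonneg_left (hMf x hx) hA.le
          nlinarith
        have hhc : ContinuousOn (fun x => (z' - z) * (A * |f x| + ε / s)) Ω :=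
          continuousOn_const.mul ((continuousOn_const.mul hfc.abs).add continuousOn_const)
        have hsub := integral_rearr_le hΩo hfin (hsl z' hz'0) hhc
          (fun x hx => hpos x hx z hz.1) (fun x hx => hpos x hx z' hz'0) hh0
          hb1 hb2 hb3 hptw hs.1.le hs.2.le
        have haff : ∀ σ' : ℝ, rearr Ω (fun x => (z' - z) * (A * |f x| + ε / s)) σ'
            ≤ (z' - z) * A * rearr Ω f σ' + (z' - z) * (ε / s) := by
          intro σ'
          refine rearr_mono_affine (by positivity) (by positivity) hMf fun x hx => ?_
          rw [abs_of_nonneg (hh0 x hx)]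
          exact le_of_eq (by ring)
        have hint : ∫ σ' in (0:ℝ)..s, rearr Ω (fun x => (z' - z) * (A * |f x| + ε / s)) σ'
            ≤ (z' - z) * A * (∫ σ' in (0:ℝ)..s, rearr Ω f σ') + (z' - z) * (ε / s) * s := by
          calc ∫ σ' in (0:ℝ)..s, rearr Ω (fun x => (z' - z) * (A * |f x| + ε / s)) σ'
              ≤ ∫ σ' in (0:ℝ)..s, ((z' - z) * A * rearr Ω f σ' + (z' - z) * (ε / s)) := by
                refine intervalIntegral.integral_mono_on hs.1.le
                  (rearr_intervalIntegrable hb3 0 s)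
                  (((rearr_intervalIntegrable hMf 0 s).const_mul _).add
                    intervalIntegrable_const) fun σ' _ => haff σ'
            _ = (z' - z) * A * (∫ σ' in (0:ℝ)..s, rearr Ω f σ') + (z' - z) * (ε / s) * s := by
                rw [intervalIntegral.integral_add
                  ((rearr_intervalIntegrable hMf 0 s).const_mul _) intervalIntegrable_const,
                  intervalIntegral.integral_const_mul, intervalIntegral.integral_const,
                  sub_zero, smul_eq_mul]
                ring
        have hεss : ε / s * s = ε := div_mul_cancel₀ ε (ne_of_gt hs.1)
        have hFz : F z = ∫ σ in (0:ℝ)..s, rearr Ω (fun x => w x z) σ := rfl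
        have hFz' : F z' = ∫ σ in (0:ℝ)..s, rearr Ω (fun x => w x z') σ := rfl
        have hCI : (z' - z) * A * (∫ σ' in (0:ℝ)..s, rearr Ω f σ') = (z' - z) * C := by
          rw [hCdef]; ring
        have hεe : (z' - z) * (ε / s) * s = (z' - z) * ε := by rw [mul_assoc, hεss]
        rw [slope_def_field]
        rw [le_div_iff₀ hΔ]
        nlinarith [hsub, hint]
      have htend : Tendsto (slope F z) (𝓝[>] z) (𝓝 (deriv F z)) :=
        (hasDerivAt_iff_tendsto_slope.mp hdiff.hasDerivAt).mono_left
          (nhdsWithin_mono z fun y hy => ne_of_gt hy)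
      have hge : -(C + ε) ≤ deriv F z :=
        ge_of_tendsto htend (eventually_of_mem (Ioo_mem_nhdsGT hz.2) hslope)
      linarith
    · rw [deriv_zero_of_not_differentiableAt hdiff]
      linarith
  rw [Filter.liminf_eq]
  by_cases hT : BddAbove {a : ℝ | ∀ᶠ z in 𝓝[>] (0:ℝ), a ≤ deriv F z}
  · apply le_of_forall_pos_le_add
    intro ε hε
    have h1 : -C - ε ≤ sSup {a : ℝ | ∀ᶠ z in 𝓝[>] (0:ℝ), a ≤ deriv F z} :=
      le_csSup hT (key ε hε)
    linarith
  · rw [csSup_of_not_bddAbove hT, Real.sSup_empty]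
    linarith
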